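/- Let K be a real number. There exist a real ω > 0 and a real τ ≥ 0 such that (1 + iω) e^{iωτ} = K if and only if |K| > 1. Thus the delayed characteristic equation (λ+1)e^{λτ} = K admits a purely imaginary root (Hopf bifurcation) for some nonnegative delay τ exactly when |K| > 1. -/

import Mathlib

/-- The delayed characteristic equation `(λ+1)e^{λτ} = K` admits a purely imaginary
root `λ = iω` with `ω > 0` for some nonnegative delay `τ` if and only if `|K| > 1`. -/
theorem hopf_bifurcation_existence_iff
    (K : ℝ) :
    (∃ ω τ : ℝ, 0 < ω ∧ 0 ≤ τ ∧
      (1 + Complex.I * ω) * Complex.exp (Complex.I * ω * τ) = K) ↔ 1 < |K| := by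
  constructor
  · rintro ⟨ω, τ, hω, hτ, heq⟩
    have habs := congrArg Norm.norm heq
    rw [norm_mul, Complex.norm_exp] at habs
    have hre : (Complex.I * ω * τ).re = 0 := by simp
    rw [hre, Real.exp_zero, mul_one, Complex.norm_real, Real.norm_eq_abs] at habs
    have h1 : (‖1 + Complex.I * ω‖)^2 = 1 + ω^2 := by
      rw [Complex.sq_norm, Complex.normSq_apply]
      simp
      ring
    nlinarith [norm_nonneg (1 + Complex.I * ω), abs_nonneg K]
  · intro hK
    have hK2 : 1 < K^2 := by nlinarith [sq_abs K, abs_nonneg K]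
    set ω := Real.sqrt (K^2 - 1) with hωdef
    have hω2 : ω^2 = K^2 - 1 := Real.sq_sqrt (by linarith)
    have hωpos : 0 < ω := Real.sqrt_pos.mpr (by linarith)
    have hden : (1 + Complex.I * (ω:ℂ)) ≠ 0 := by
      intro h
      have := congrArg Complex.re h
      simp at this
    set z : ℂ := (K : ℂ) / (1 + Complex.I * ω) with hz
    have hKne : |K| ≠ 0 := by positivity
    have habsden : (‖1 + Complex.I * ω‖) = |K| := by
      have h1 : (‖1 + Complex.I * ω‖)^2 = 1 + ω^2 := by
        rw [Complex.sq_norm, Complex.normSq_apply]; simp; ring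
      nlinarith [norm_nonneg (1 + Complex.I * ω), abs_nonneg K, sq_abs K]
    have habsz : ‖z‖ = 1 := by
      rw [hz, norm_div, Complex.norm_real, Real.norm_eq_abs, habsden, div_self hKne]
    have hexp : Complex.exp ((z.arg : ℂ) * Complex.I) = z := by
      have := Complex.norm_mul_exp_arg_mul_I z
      rwa [habsz, Complex.ofReal_one, one_mul] at this
    refine ⟨ω, (z.arg + 2 * Real.pi) / ω, hωpos, ?_, ?_⟩
    · have h1 := Complex.neg_pi_lt_arg z
      have h2 := Real.pi_pos
      apply div_nonneg _ hωpos.le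
      linarith
    · have harg : Complex.I * (ω:ℂ) * (((z.arg + 2 * Real.pi) / ω : ℝ) : ℂ) =
          (z.arg : ℂ) * Complex.I + 2 * (Real.pi : ℂ) * Complex.I := by
        have hωc : (ω:ℂ) ≠ 0 := by exact_mod_cast hωpos.ne'
        push_cast
        field_simp
      rw [harg, Complex.exp_add, hexp, Complex.exp_two_pi_mul_I, mul_one, hz,
        mul_div_cancel₀ _ hden]
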